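/- For every integer M ≥ 0, Σ_{p=0}^{M} (binom(2M, M+p) − binom(2M, M+p+1))^2 = catalan(2M), where catalan(n) = (1/(n+1))·binom(2n, n) is the n-th Catalan number. -/

import Mathlib

open Finset

lemma sum_choose_sq (n : ℕ) :
    ∑ j ∈ Finset.range (n + 1), n.choose j * n.choose j = (2 * n).choose n := by
  rw [two_mul, Nat.add_choose_eq, Finset.Nat.sum_antidiagonal_eq_sum_range_succ_mk]
  refine Finset.sum_congr rfl fun i hi => ?_
  rw [Nat.choose_symm (Finset.mem_range_succ_iff.mp hi)]

lemma sum_choose_mul_succ (n : ℕ) (hn : 1 ≤ n) :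
    ∑ j ∈ Finset.range (n + 1), n.choose j * n.choose (j + 1) = (2 * n).choose (n - 1) := by
  rw [two_mul, Nat.add_choose_eq, Finset.Nat.sum_antidiagonal_eq_sum_range_succ_mk,
    Finset.sum_range_succ, Nat.choose_succ_self, Nat.mul_zero, add_zero,
    Nat.succ_eq_add_one, show n - 1 + 1 = n by omega]
  refine Finset.sum_congr rfl fun i hi => ?_
  have hi' := Finset.mem_range.mp hi
  rw [show n - 1 - i = n - (i + 1) by omega, Nat.choose_symm (by omega)]

lemma d_reflect (M j : ℕ) (hj : j < M) :
    ((2 * M).choose (2 * M - 1 - j) : ℚ) - (2 * M).choose (2 * M - 1 - j + 1)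
      = -(((2 * M).choose j : ℚ) - (2 * M).choose (j + 1)) := by
  rw [show 2 * M - 1 - j = 2 * M - (j + 1) by omega,
    show 2 * M - (j + 1) + 1 = 2 * M - j by omega,
    Nat.choose_symm (by omega), Nat.choose_symm (by omega)]
  ring

/-- `Σ_{p=0}^{M} (binom(2M, M+p) − binom(2M, M+p+1))^2 = catalan(2M)`, where
`catalan(n) = (1/(n+1))·binom(2n, n)`. -/
theorem sum_sq_ballot_eq_catalan (M : ℕ) :
    ∑ p ∈ Finset.range (M + 1),
        ((Nat.choose (2 * M) (M + p) : ℚ) - (Nat.choose (2 * M) (M + p + 1) : ℚ)) ^ 2 =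
      (1 / ((2 * M : ℚ) + 1)) * (Nat.choose (2 * (2 * M)) (2 * M) : ℚ) := by
  rcases Nat.eq_zero_or_pos M with rfl | hM
  · norm_num
  set n := 2 * M with hn
  set A : ℚ := ((2 * n).choose n : ℚ) with hA_def
  set B : ℚ := ((2 * n).choose (n - 1) : ℚ) with hB_def
  have hA : (∑ j ∈ Finset.range (n + 1), ((n.choose j : ℚ)) ^ 2) = A := by
    simp only [pow_two, hA_def]
    exact_mod_cast congrArg (Nat.cast : ℕ → ℚ) (sum_choose_sq n)
  have hB : (∑ j ∈ Finset.range (n + 1), ((n.choose j : ℚ)) * (n.choose (j + 1) : ℚ)) = B := by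
    rw [hB_def]
    exact_mod_cast congrArg (Nat.cast : ℕ → ℚ) (sum_choose_mul_succ n (by omega))
  have hC : (∑ j ∈ Finset.range (n + 1), ((n.choose (j + 1) : ℚ)) ^ 2) = A - 1 := by
    have h1 : (∑ j ∈ Finset.range (n + 1), ((n.choose j : ℚ)) ^ 2)
        = (∑ j ∈ Finset.range n, ((n.choose (j + 1) : ℚ)) ^ 2) + ((n.choose 0 : ℚ)) ^ 2 :=
      Finset.sum_range_succ' _ n
    have h2 : (∑ j ∈ Finset.range (n + 1), ((n.choose (j + 1) : ℚ)) ^ 2)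
        = (∑ j ∈ Finset.range n, ((n.choose (j + 1) : ℚ)) ^ 2) + ((n.choose (n + 1) : ℚ)) ^ 2 :=
      Finset.sum_range_succ _ n
    rw [Nat.choose_succ_self] at h2
    rw [hA] at h1
    simp at h2
    rw [h2]
    simp at h1
    linarith
  -- total sum S over all j
  have hS : (∑ j ∈ Finset.range (n + 1),
      ((n.choose j : ℚ) - (n.choose (j + 1) : ℚ)) ^ 2) = 2 * A - 2 * B - 1 := by
    have expand : ∀ j : ℕ, ((n.choose j : ℚ) - (n.choose (j + 1) : ℚ)) ^ 2
        = ((n.choose j : ℚ)) ^ 2 - 2 * ((n.choose j : ℚ) * (n.choose (j + 1) : ℚ))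
          + ((n.choose (j + 1) : ℚ)) ^ 2 := fun j => by ring
    simp only [expand, Finset.sum_add_distrib, Finset.sum_sub_distrib, ← Finset.mul_sum]
    rw [hA, hB, hC]; ring
  -- split S
  have hsplit : (∑ j ∈ Finset.range (n + 1),
        ((n.choose j : ℚ) - (n.choose (j + 1) : ℚ)) ^ 2)
      = (∑ j ∈ Finset.range M, ((n.choose j : ℚ) - (n.choose (j + 1) : ℚ)) ^ 2)
        + ∑ p ∈ Finset.range (M + 1),
            ((n.choose (M + p) : ℚ) - (n.choose (M + p + 1) : ℚ)) ^ 2 := by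
    rw [show n + 1 = M + (M + 1) by omega, Finset.sum_range_add]
  -- reflection
  have hrefl : (∑ j ∈ Finset.range M, ((n.choose j : ℚ) - (n.choose (j + 1) : ℚ)) ^ 2)
      = ∑ p ∈ Finset.range M, ((n.choose (M + p) : ℚ) - (n.choose (M + p + 1) : ℚ)) ^ 2 := by
    conv_rhs => rw [← Finset.sum_range_reflect (fun p => ((n.choose (M + p) : ℚ)
      - (n.choose (M + p + 1) : ℚ)) ^ 2) M]
    refine Finset.sum_congr rfl fun p hp => ?_
    have hp' := Finset.mem_range.mp hp
    simp only [show M + (M - 1 - p) = 2 * M - 1 - p from by omega]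
    rw [hn, d_reflect M p hp', neg_sq]
  -- last term
  have hlast : ∑ p ∈ Finset.range (M + 1),
        ((n.choose (M + p) : ℚ) - (n.choose (M + p + 1) : ℚ)) ^ 2
      = (∑ p ∈ Finset.range M, ((n.choose (M + p) : ℚ) - (n.choose (M + p + 1) : ℚ)) ^ 2)
        + 1 := by
    rw [Finset.sum_range_succ, show M + M = n by omega, show n + 1 = n + 1 from rfl,
      Nat.choose_self, Nat.choose_succ_self]
    norm_num
  -- hence target = A - B
  have hT : ∑ p ∈ Finset.range (M + 1),
      ((n.choose (M + p) : ℚ) - (n.choose (M + p + 1) : ℚ)) ^ 2 = A - B := by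
    rw [hsplit, hrefl, hlast] at hS
    linarith
  rw [hT]
  -- Catalan relation
  have hq : ((2 * n).choose n : ℚ) * n = ((2 * n).choose (n - 1) : ℚ) * (n + 1) := by
    have h := Nat.choose_succ_right_eq (2 * n) (n - 1)
    rw [show n - 1 + 1 = n by omega, show 2 * n - (n - 1) = n + 1 by omega] at h
    exact_mod_cast congrArg (Nat.cast : ℕ → ℚ) h
  have hn1 : ((2 * M : ℚ) + 1) ≠ 0 := by positivity
  rw [hA_def, hB_def] at *
  field_simp
  have : (n : ℚ) = 2 * M := by exact_mod_cast congrArg (Nat.cast : ℕ → ℚ) hn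
  rw [this] at hq
  linarith
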